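/- The Dirichlet inverse of κ_0 is 2μ − ε: for all n ≥ 1, Σ_{d|n} κ_0(d)·(2μ(n/d) − ε(n/d)) = ε(n), where ε(1)=1 and ε(n)=0 otherwise. -/

import Mathlib

open Finset

/-- Recursive divisor function: κ_x(n) = n^x + Σ_{d|n, d<n} κ_x(d). -/
noncomputable def kappa (x : ℂ) (n : ℕ) : ℂ :=
  (n : ℂ) ^ x + ∑ d ∈ n.properDivisors.attach, kappa x d.1
termination_by n
decreasing_by exact (Nat.mem_properDivisors.mp d.2).2

/-- Number of ordered factorizations: K(n) = ε(n) + Σ_{d|n, d<n} K(d). -/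
def Kfac (n : ℕ) : ℕ :=
  (if n = 1 then 1 else 0) + ∑ d ∈ n.properDivisors.attach, Kfac d.1
termination_by n
decreasing_by exact (Nat.mem_properDivisors.mp d.2).2

/-- Divisor power sum σ_x(n) = Σ_{d|n} d^x. -/
noncomputable def sigmaC (x : ℂ) (n : ℕ) : ℂ := ∑ d ∈ n.divisors, (d : ℂ) ^ x

/-- Jordan's totient J_x = μ * id_x. -/
noncomputable def jordan (x : ℂ) (n : ℕ) : ℂ :=
  ∑ d ∈ n.divisors, (ArithmeticFunction.moebius d : ℂ) * ((n / d : ℕ) : ℂ) ^ x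

open ArithmeticFunction
open scoped ArithmeticFunction.Moebius ArithmeticFunction.zeta

noncomputable def Kf : ArithmeticFunction ℂ :=
  ⟨fun n => if n = 0 then 0 else kappa 0 n, if_pos rfl⟩

lemma Kf_apply {n : ℕ} (hn : n ≠ 0) : Kf n = kappa 0 n := if_neg hn

lemma sub_apply' (f g : ArithmeticFunction ℂ) (n : ℕ) : (f - g) n = f n - g n := rfl

lemma kappa_rec (n : ℕ) :
    kappa 0 n = 1 + ∑ d ∈ n.properDivisors, kappa 0 d := by
  rw [kappa, Complex.cpow_zero]
  congr 1
  exact Finset.sum_attach _ _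

lemma sum_div (n : ℕ) (hn : n ≠ 0) :
    ∑ d ∈ n.divisors, kappa 0 d = 2 * kappa 0 n - 1 := by
  rw [← Nat.insert_self_properDivisors hn, Finset.sum_insert Nat.self_notMem_properDivisors]
  rw [kappa_rec n]; ring

lemma key : Kf * (ζ : ArithmeticFunction ℂ) = Kf + Kf - (ζ : ArithmeticFunction ℂ) := by
  ext n
  rcases eq_or_ne n 0 with rfl | hn
  · simp
  rw [coe_mul_zeta_apply, sub_apply', ArithmeticFunction.add_apply]
  have h2 : ∑ d ∈ n.divisors, Kf d = ∑ d ∈ n.divisors, kappa 0 d :=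
    Finset.sum_congr rfl fun d hd => Kf_apply (Nat.pos_of_mem_divisors hd).ne'
  rw [h2, sum_div n hn, Kf_apply hn]
  simp [hn]
  ring

lemma key2 : Kf * ((μ : ArithmeticFunction ℂ) + (μ : ArithmeticFunction ℂ) - 1) = 1 := by
  have h := congrArg (· * (μ : ArithmeticFunction ℂ)) key
  simp only [mul_assoc, coe_zeta_mul_coe_moebius, mul_one] at h
  have h2 : ((μ : ArithmeticFunction ℂ)) * (ζ : ArithmeticFunction ℂ) = 1 :=
    coe_moebius_mul_coe_zeta
  linear_combination (-1 : ArithmeticFunction ℂ) * h + h2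

theorem stmt6 (n : ℕ) (hn : 1 ≤ n) :
    ∑ d ∈ n.divisors, kappa 0 d *
        (2 * (ArithmeticFunction.moebius (n / d) : ℂ) - (if n / d = 1 then 1 else 0)) =
      (if n = 1 then 1 else 0) := by
  have h := congrArg (fun f => f n) key2
  simp only [mul_apply] at h
  have hn' : n ≠ 0 := by omega
  calc ∑ d ∈ n.divisors, kappa 0 d *
        (2 * (ArithmeticFunction.moebius (n / d) : ℂ) - (if n / d = 1 then 1 else 0))
      = ∑ d ∈ n.divisors, Kf d *
          (((μ : ArithmeticFunction ℂ) + (μ : ArithmeticFunction ℂ) - 1) (n / d)) := by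
        refine Finset.sum_congr rfl fun d hd => ?_
        rw [Kf_apply (Nat.pos_of_mem_divisors hd).ne', sub_apply', ArithmeticFunction.add_apply, one_apply,
          intCoe_apply]
        ring
    _ = ∑ x ∈ n.divisorsAntidiagonal,
          Kf x.1 * (((μ : ArithmeticFunction ℂ) + (μ : ArithmeticFunction ℂ) - 1) x.2) :=
        (Nat.sum_divisorsAntidiagonal
          (fun x y => Kf x * (((μ : ArithmeticFunction ℂ) + (μ : ArithmeticFunction ℂ) - 1) y))).symm
    _ = (if n = 1 then 1 else 0) := by rw [h]; simp [one_apply]
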